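/- Let A and B be finite alphabets, let x ∈ A^ℤ and y ∈ B^ℤ be eventually periodic sequences, each with least period N, and let X and Y be the subshifts they generate. If a(x) ≡ a(y) (mod N), then X and Y are conjugate. -/

import Mathlib

set_option linter.unusedSectionVars false
set_option linter.unusedVariables false
set_option maxHeartbeats 1000000


open Classical

/-- The shift map `σ` on bi-infinite sequences: `σ(x)_i = x_{i+1}`. -/
def shiftMap {A : Type*} (x : ℤ → A) : ℤ → A := fun i => x (i + 1)

/-- The iterated shift `σ^k` for `k ∈ ℤ`: `σ^k(x)_i = x_{i+k}`. -/
def shiftZ {A : Type*} (k : ℤ) (x : ℤ → A) : ℤ → A := fun i => x (i + k)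

/-- `x` is periodic with period `N > 0`, i.e. `σ^N(x) = x`. -/
def IsPeriodicWith {A : Type*} (x : ℤ → A) (N : ℕ) : Prop :=
  0 < N ∧ ∀ i : ℤ, x (i + N) = x i

/-- `x` is periodic (with some period `N > 0`). -/
def IsPeriodicSeq {A : Type*} (x : ℤ → A) : Prop := ∃ N : ℕ, IsPeriodicWith x N

/-- The sequence `p(x;i,n)` obtained from `x` by removing the block `x_{i+1} ⋯ x_{i+n}`. -/
def removeBlock {A : Type*} (x : ℤ → A) (i : ℤ) (n : ℕ) : ℤ → A :=
  fun k => if k ≤ i then x k else x (k + n)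

/-- `(i,n)` is an anomaly occurrence of `x`: `n > 0` and `p(x;i,n)` is periodic. -/
def IsAnomalyOcc {A : Type*} (x : ℤ → A) (i : ℤ) (n : ℕ) : Prop :=
  0 < n ∧ IsPeriodicSeq (removeBlock x i n)

/-- `x` is eventually periodic: non-periodic, but removing some block leaves a periodic sequence. -/
def EventuallyPeriodic {A : Type*} (x : ℤ → A) : Prop :=
  ¬ IsPeriodicSeq x ∧ ∃ (i : ℤ) (n : ℕ), IsAnomalyOcc x i n

/-- The least period of an eventually periodic sequence `x`: the least period of
`p(x;i,n)` over anomaly occurrences `(i,n)` of `x`. -/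
noncomputable def evLeastPeriod {A : Type*} (x : ℤ → A) : ℕ :=
  sInf {N : ℕ | ∃ (i : ℤ) (n : ℕ), IsAnomalyOcc x i n ∧ IsPeriodicWith (removeBlock x i n) N}

/-- The anomaly size `a(x)`: the minimum of `n` over anomaly occurrences `(i,n)` of `x`. -/
noncomputable def anomalySize {A : Type*} (x : ℤ → A) : ℕ :=
  sInf {n : ℕ | ∃ i : ℤ, IsAnomalyOcc x i n}

/-- The orbit `{σ^k(x) : k ∈ ℤ}` of a bi-infinite sequence. -/
def seqOrbit {A : Type*} (x : ℤ → A) : Set (ℤ → A) := {y | ∃ k : ℤ, y = shiftZ k x}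

/-- The subshift generated by `x`: the closure of its orbit in the product topology. -/
def subshiftGen {A : Type*} [TopologicalSpace A] (x : ℤ → A) : Set (ℤ → A) :=
  closure (seqOrbit x)

/-- Two subshifts are conjugate if there is a homeomorphism between them commuting
with the shift. -/
def Conjugate {A B : Type*} [TopologicalSpace A] [TopologicalSpace B]
    (X : Set (ℤ → A)) (Y : Set (ℤ → B)) : Prop :=
  ∃ φ : X ≃ₜ Y, ∀ (u : ℤ → A) (hu : u ∈ X) (hu' : shiftMap u ∈ X),
    ((φ ⟨shiftMap u, hu'⟩ : Y) : ℤ → B) = shiftMap ((φ ⟨u, hu⟩ : Y) : ℤ → B)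

/-- The relation generating the suspension: `(x,s) ∼ (σ^n(x), s - n)`. -/
def SuspRel {A : Type*} (X : Set (ℤ → A)) : (X × ℝ) → (X × ℝ) → Prop :=
  fun p q => ∃ n : ℤ, (q.1 : ℤ → A) = shiftZ n (p.1 : ℤ → A) ∧ q.2 = p.2 - n

/-- The suspension `ΣX` of a subshift `X`. -/
def Susp {A : Type*} [TopologicalSpace A] (X : Set (ℤ → A)) : Type _ :=
  Quot (SuspRel X)

instance {A : Type*} [TopologicalSpace A] (X : Set (ℤ → A)) : TopologicalSpace (Susp X) :=
  instTopologicalSpaceQuot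

/-- The suspension flow `φ_t [x,s] = [x, s+t]`. -/
def suspFlow {A : Type*} [TopologicalSpace A] (X : Set (ℤ → A)) (t : ℝ) :
    Susp X → Susp X :=
  Quot.lift (fun p => Quot.mk _ (p.1, p.2 + t)) (by
    rintro p r ⟨n, h1, h2⟩
    exact Quot.sound ⟨n, h1, by rw [h2]; ring⟩)

/-- Two subshifts are flow equivalent if there is a homeomorphism of their suspensions
taking flow lines to flow lines in an orientation-preserving way. -/
def FlowEquiv {A B : Type*} [TopologicalSpace A] [TopologicalSpace B]
    (X : Set (ℤ → A)) (Y : Set (ℤ → B)) : Prop :=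
  ∃ h : Susp X ≃ₜ Susp Y, ∀ u : Susp X, ∃ τ : ℝ → ℝ,
    StrictMono τ ∧ Function.Bijective τ ∧ τ 0 = 0 ∧
      ∀ t : ℝ, h (suspFlow X t u) = suspFlow Y (τ t) (h u)

/-- Cell lengths `z_n` for the type-`S` skew Sturmian sequence `S(0, q/p)`, with `β = p/q`. -/
noncomputable def cellLenS (p q : ℤ) (n : ℤ) : ℕ :=
  if n < 0 then
    ({k : ℤ | (n : ℚ) < (k : ℚ) * ((p : ℚ) / (q : ℚ)) ∧
        (k : ℚ) * ((p : ℚ) / (q : ℚ)) ≤ (n : ℚ) + 1}).ncard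
  else if n = 0 then
    ({k : ℤ | 0 < (k : ℚ) * ((p : ℚ) / (q : ℚ)) ∧
        (k : ℚ) * ((p : ℚ) / (q : ℚ)) < 1}).ncard
  else
    ({k : ℤ | (n : ℚ) ≤ (k : ℚ) * ((p : ℚ) / (q : ℚ)) ∧
        (k : ℚ) * ((p : ℚ) / (q : ℚ)) < (n : ℚ) + 1}).ncard

/-- Cell lengths `z′_n` for the type-`S′` skew Sturmian sequence `S′(0, q/p)`, with `β = p/q`. -/
noncomputable def cellLenS' (p q : ℤ) (n : ℤ) : ℕ :=
  if n < 0 then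
    ({k : ℤ | (n : ℚ) ≤ (k : ℚ) * ((p : ℚ) / (q : ℚ)) ∧
        (k : ℚ) * ((p : ℚ) / (q : ℚ)) < (n : ℚ) + 1}).ncard
  else if n = 0 then
    ({k : ℤ | 0 ≤ (k : ℚ) * ((p : ℚ) / (q : ℚ)) ∧
        (k : ℚ) * ((p : ℚ) / (q : ℚ)) ≤ 1}).ncard
  else
    ({k : ℤ | (n : ℚ) < (k : ℚ) * ((p : ℚ) / (q : ℚ)) ∧
        (k : ℚ) * ((p : ℚ) / (q : ℚ)) ≤ (n : ℚ) + 1}).ncard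

/-- The position `L_n` of the leading `1` of the cell `B_n`. -/
noncomputable def cellStart (z : ℤ → ℕ) (n : ℤ) : ℤ :=
  if 0 ≤ n then n + ∑ j ∈ Finset.Ico (0 : ℤ) n, (z j : ℤ)
  else n - ∑ j ∈ Finset.Ico n (0 : ℤ), (z j : ℤ)

/-- The `{0,1}`-sequence determined by cell lengths `z`: a `1` at each position `L_n`
and `0` elsewhere. -/
noncomputable def seqOfCells (z : ℤ → ℕ) : ℤ → Fin 2 :=
  fun i => if ∃ n : ℤ, i = cellStart z n then 1 else 0

/-- The type-`S` skew Sturmian sequence `S(0, q/p)`. -/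
noncomputable def sturmS (p q : ℤ) : ℤ → Fin 2 := seqOfCells (cellLenS p q)

/-- The type-`S′` skew Sturmian sequence `S′(0, q/p)`. -/
noncomputable def sturmS' (p q : ℤ) : ℤ → Fin 2 := seqOfCells (cellLenS' p q)

section Arith
variable {A : Type*}

lemma shiftZ_shiftZ (a b : ℤ) (x : ℤ → A) : shiftZ a (shiftZ b x) = shiftZ (a + b) x := by
  funext i; show x (i + a + b) = x (i + (a + b)); ring_nf

lemma invar_int (u : ℤ → A) (d : ℤ) (h : ∀ k, u (k + d) = u k) :
    ∀ (s : ℤ) (k : ℤ), u (k + s * d) = u k := by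
  intro s
  induction s using Int.induction_on with
  | zero => simp
  | succ m ih =>
    intro k
    have h1 : k + ((m : ℤ) + 1) * d = (k + d) + (m : ℤ) * d := by ring
    rw [h1, ih (k + d)]
    exact h k
  | pred m ih =>
    intro k
    have h1 : k + (-(m : ℤ) - 1) * d = (k - d) + (-(m : ℤ)) * d := by ring
    rw [h1, ih (k - d)]
    have h2 := h (k - d)
    have h3 : k - d + d = k := by ring
    rw [h3] at h2
    exact h2.symm

lemma per_int (u : ℤ → A) {N : ℕ} (h : IsPeriodicWith u N) :
    ∀ (s k : ℤ), u (k + s * N) = u k :=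
  invar_int u (N : ℤ) h.2

lemma period_of_dvd (u : ℤ → A) {N : ℕ} (h : IsPeriodicWith u N) {d : ℤ}
    (hd : (N : ℤ) ∣ d) : ∀ k, u (k + d) = u k := by
  obtain ⟨s, rfl⟩ := hd
  intro k
  rw [mul_comm]
  exact per_int u h s k

lemma agree_window (u v : ℤ → A) {N : ℕ} (hu : IsPeriodicWith u N) (hv : IsPeriodicWith v N)
    (j : ℤ) (hag : ∀ k, j ≤ k → k < j + N → u k = v k) : u = v := by
  funext k
  have hN0 : (0:ℤ) < (N:ℤ) := by exact_mod_cast hu.1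
  set r := (k - j) % (N:ℤ) with hr
  have hr0 : 0 ≤ r := Int.emod_nonneg _ (ne_of_gt hN0)
  have hrN : r < (N:ℤ) := Int.emod_lt_of_pos _ hN0
  have hk : k = (j + r) + ((k - j) / (N:ℤ)) * (N:ℤ) := by
    have h2 := Int.emod_add_mul_ediv (k - j) (N:ℤ)
    rw [← hr] at h2
    linarith
  rw [hk, per_int u hu ((k - j) / (N:ℤ)) (j + r), per_int v hv ((k - j) / (N:ℤ)) (j + r)]
  exact hag (j + r) (by omega) (by omega)

lemma dvd_of_invar (u : ℤ → A) {N : ℕ} (hu : IsPeriodicWith u N)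
    (hmin : ∀ M, IsPeriodicWith u M → N ≤ M) {d : ℤ} (hd : ∀ k, u (k + d) = u k) :
    (N : ℤ) ∣ d := by
  rcases eq_or_ne d 0 with rfl | hd0
  · exact dvd_zero _
  set g := Int.gcd d (N : ℤ) with hg
  have hg0 : 0 < g := by
    rcases Nat.eq_zero_or_pos g with h0 | h0
    · exfalso
      rw [hg] at h0
      have := Int.gcd_eq_zero_iff.mp h0
      exact hd0 this.1
    · exact h0
  have hper : IsPeriodicWith u g := by
    refine ⟨hg0, ?_⟩
    intro k
    have hbez : (g : ℤ) = d * Int.gcdA d (N:ℤ) + (N:ℤ) * Int.gcdB d (N:ℤ) :=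
      Int.gcd_eq_gcd_ab d (N:ℤ)
    have h1 : k + (g:ℤ) = (k + (N:ℤ) * Int.gcdB d (N:ℤ)) + (Int.gcdA d (N:ℤ)) * d := by
      rw [hbez]; ring
    rw [h1, invar_int u d hd (Int.gcdA d (N:ℤ))]
    have h2 : k + (N:ℤ) * Int.gcdB d (N:ℤ) = k + (Int.gcdB d (N:ℤ)) * (N:ℤ) := by ring
    rw [h2, per_int u hu]
  have h1 : N ≤ g := hmin g hper
  have h2 : (g : ℤ) ∣ (N : ℤ) := Int.gcd_dvd_right d (N : ℤ)
  have h3 : g ≤ N := by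
    have hN0 : (0:ℤ) < (N:ℤ) := by exact_mod_cast hu.1
    have := Int.le_of_dvd hN0 h2
    exact_mod_cast this
  have hgN : g = N := le_antisymm h3 h1
  have := Int.gcd_dvd_left (a := d) (b := (N:ℤ))
  rw [← hg, hgN] at this
  exact this

end Arith

section Ctx
variable {A : Type*} (x p : ℤ → A) (i : ℤ) (n N : ℕ)

lemma shiftZ_zero (x : ℤ → A) : shiftZ 0 x = x := funext fun i => congrArg x (add_zero i)

lemma per_offset (e : ℤ) {u : ℤ → A} (h : IsPeriodicWith u N) :
    IsPeriodicWith (fun l => u (l + e)) N := by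
  refine ⟨h.1, fun k => ?_⟩
  have h2 := h.2 (k + e)
  have e1 : k + (N:ℤ) + e = k + e + (N:ℤ) := by ring
  show u (k + (N:ℤ) + e) = u (k + e)
  rw [e1]; exact h2

lemma shiftZ_per (e : ℤ) {u : ℤ → A} (h : IsPeriodicWith u N) :
    IsPeriodicWith (shiftZ e u) N := per_offset N e h

lemma x_left (hp : p = removeBlock x i n) : ∀ k : ℤ, k ≤ i → x k = p k := by
  intro k hk; rw [hp]; simp [removeBlock, hk]

lemma x_right (hp : p = removeBlock x i n) : ∀ k : ℤ, i + n < k → x k = p (k - n) := by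
  intro k hk
  rw [hp]
  have h1 : ¬ (k - (n:ℤ) ≤ i) := by omega
  show x k = removeBlock x i n (k - n)
  simp only [removeBlock, h1, if_false]
  congr 1; omega

lemma shift_inj (hxnp : ¬ IsPeriodicSeq x) {a b : ℤ} (h : shiftZ a x = shiftZ b x) : a = b := by
  by_contra hne
  apply hxnp
  have hf : ∀ k : ℤ, x (k + a) = x (k + b) := fun k => congrFun h k
  set d := b - a with hd
  have hinv : ∀ k, x (k + d) = x k := by
    intro k
    have h0 := hf (k - a)
    have e1 : k - a + a = k := by ring
    have e2 : k - a + b = k + d := by rw [hd]; ring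
    rw [e1, e2] at h0
    exact h0.symm
  have hd0 : d ≠ 0 := fun h0 => hne (by omega)
  refine ⟨d.natAbs, Int.natAbs_pos.mpr hd0, ?_⟩
  intro k
  rcases Int.natAbs_eq d with he | he
  · rw [← he]; exact hinv k
  · have h0 := hinv (k - d)
    have e1 : k - d + d = k := by ring
    rw [e1] at h0
    have e2 : k + (d.natAbs : ℤ) = k - d := by omega
    rw [e2]; exact h0.symm

lemma x_nonper_shift (hxnp : ¬ IsPeriodicSeq x) (m : ℤ) : ¬ IsPeriodicSeq (shiftZ m x) := by
  rintro ⟨M, hM1, hM2⟩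
  apply hxnp
  refine ⟨M, hM1, fun k => ?_⟩
  have := hM2 (k - m)
  show x (k + (M:ℤ)) = x k
  have e1 : k - m + (M:ℤ) + m = k + M := by ring
  have e2 : k - m + m = k := by ring
  show x (k + (M:ℤ)) = x k
  have h3 : x (k - m + (M:ℤ) + m) = x (k - m + m) := this
  rw [e1, e2] at h3
  exact h3

lemma x_ne_shift_p (hxnp : ¬ IsPeriodicSeq x) (hpN : IsPeriodicWith p N) (m j : ℤ) :
    shiftZ m x ≠ shiftZ j p := by
  intro h
  exact x_nonper_shift x hxnp m (h ▸ ⟨N, shiftZ_per N j hpN⟩)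

lemma shift_p_eq_of_dvd (hpN : IsPeriodicWith p N) {a b : ℤ} (h : (N:ℤ) ∣ a - b) :
    shiftZ a p = shiftZ b p := by
  funext k
  show p (k + a) = p (k + b)
  have e1 : k + a = (k + b) + (a - b) := by ring
  rw [e1]
  exact period_of_dvd p hpN h (k + b)

lemma dvd_of_shift_p_eq (hpN : IsPeriodicWith p N)
    (hmin : ∀ M, IsPeriodicWith p M → N ≤ M) {a b : ℤ} (h : shiftZ a p = shiftZ b p) :
    (N:ℤ) ∣ a - b := by
  apply dvd_of_invar p hpN hmin
  intro k
  have h0 := congrFun h (k - b)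
  show p (k + (a - b)) = p k
  have e1 : k - b + a = k + (a - b) := by ring
  have e2 : k - b + b = k := by ring
  have h1 : p (k - b + a) = p (k - b + b) := h0
  rw [e1, e2] at h1
  exact h1

lemma gamma_lemma (hxnp : ¬ IsPeriodicSeq x) (hp : p = removeBlock x i n)
    (hpN : IsPeriodicWith p N) (e : ℤ)
    (hag : ∀ l : ℤ, i - N - n ≤ l → l ≤ i + n + N → x l = p (l + e)) : False := by
  have hNpos : 0 < N := hpN.1
  have hEq1 : (fun l => p (l + e)) = p := by
    apply agree_window _ _ (per_offset N e hpN) hpN (i - N)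
    intro k hk1 hk2
    have hxl := x_left x p i n hp k (by omega)
    have h0 := hag k (by omega) (by omega)
    exact h0.symm.trans hxl
  have hEq2 : (fun l => p (l + e)) = (fun l => p (l + (-(n:ℤ)))) := by
    apply agree_window _ _ (per_offset N e hpN) (per_offset N (-(n:ℤ)) hpN) (i + n + 1)
    intro k hk1 hk2
    have hxr := x_right x p i n hp k (by omega)
    have h0 := hag k (by omega) (by omega)
    have e1 : k - (n:ℤ) = k + (-(n:ℤ)) := by ring
    rw [e1] at hxr
    exact h0.symm.trans hxr
  have hpn : ∀ l : ℤ, p (l + (-(n:ℤ))) = p l := by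
    intro l
    have h1 := congrFun hEq1 l
    have h2 := congrFun hEq2 l
    exact (h2.symm.trans h1 : _)
  apply hxnp
  have hxp : x = p := by
    funext l
    rcases le_or_gt l i with hl | hl
    · exact x_left x p i n hp l hl
    rcases le_or_gt l (i + n) with hl2 | hl2
    · have h0 := hag l (by omega) (by omega)
      rw [h0]
      exact congrFun hEq1 l
    · rw [x_right x p i n hp l (by omega)]
      have e1 : l - (n:ℤ) = l + (-(n:ℤ)) := by ring
      rw [e1]
      exact hpn l
  rw [hxp]
  exact ⟨N, hpN⟩

lemma lemma13 (hxnp : ¬ IsPeriodicSeq x) (hp : p = removeBlock x i n)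
    (hpN : IsPeriodicWith p N) (hmin : ∀ M, IsPeriodicWith p M → N ≤ M)
    (T S m j : ℤ) (hT : (N:ℤ) + n + 1 ≤ T) (hS : (N:ℤ) + (n:ℤ) + T ≤ S)
    (hag : ∀ k : ℤ, -S ≤ k → k ≤ S → x (k + m) = p (k + j)) :
    (m ≤ i - T ∧ (N:ℤ) ∣ (m - j)) ∨ (i + T ≤ m ∧ (N:ℤ) ∣ (m - n - j)) := by
  have hNpos : 0 < N := hpN.1
  rcases le_or_gt m (i - T) with hm | hm
  · left
    refine ⟨hm, ?_⟩
    have hww : (fun k => p (k + m)) = (fun k => p (k + j)) := by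
      apply agree_window _ _ (per_offset N m hpN) (per_offset N j hpN) 0
      intro k hk1 hk2
      have hxl := x_left x p i n hp (k + m) (by omega)
      have h0 := hag k (by omega) (by omega)
      exact hxl.symm.trans h0
    apply dvd_of_invar p hpN hmin
    intro k
    have h0 := congrFun hww (k - j)
    have e1 : k - j + m = k + (m - j) := by ring
    have e2 : k - j + j = k := by ring
    have h1 : p (k - j + m) = p (k - j + j) := h0
    rw [e1, e2] at h1
    exact h1
  rcases le_or_gt (i + T) m with hm2 | hm2
  · right
    refine ⟨hm2, ?_⟩
    have hww : (fun k => p (k + (m - n))) = (fun k => p (k + j)) := by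
      apply agree_window _ _ (per_offset N (m - n) hpN) (per_offset N j hpN) 0
      intro k hk1 hk2
      have hxr := x_right x p i n hp (k + m) (by omega)
      have h0 := hag k (by omega) (by omega)
      have e1 : k + m - (n:ℤ) = k + (m - n) := by ring
      rw [e1] at hxr
      exact hxr.symm.trans h0
    apply dvd_of_invar p hpN hmin
    intro k
    have h0 := congrFun hww (k - j)
    have e1 : k - j + (m - n) = k + (m - n - j) := by ring
    have e2 : k - j + j = k := by ring
    have h1 : p (k - j + (m - n)) = p (k - j + j) := h0
    rw [e1, e2] at h1
    exact h1
  · exfalso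
    apply gamma_lemma x p i n N hxnp hp hpN (j - m)
    intro l hl1 hl2
    have h0 := hag (l - m) (by omega) (by omega)
    have e1 : l - m + m = l := by ring
    have e2 : l - m + j = l + (j - m) := by ring
    rw [e1, e2] at h0
    exact h0

end Ctx

section Topo
open Filter Topology
variable {A : Type*} [TopologicalSpace A] [DiscreteTopology A]
variable (x p : ℤ → A) (i : ℤ) (n N : ℕ)

lemma shiftZ_apply (k : ℤ) (x : ℤ → A) (j : ℤ) : shiftZ k x j = x (j + k) := rfl

lemma tendsto_coord {ι : Type*} {l : Filter ι} {f : ι → ℤ → A} {u : ℤ → A}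
    (h : Tendsto f l (𝓝 u)) (k : ℤ) : ∀ᶠ t in l, f t k = u k := by
  have h1 := (tendsto_pi_nhds.mp h) k
  have h2 : {u k} ∈ 𝓝 (u k) := (isOpen_discrete _).mem_nhds rfl
  exact h1 h2

lemma tendsto_window {ι : Type*} {l : Filter ι} {f : ι → ℤ → A} {u : ℤ → A}
    (h : Tendsto f l (𝓝 u)) (a b : ℤ) :
    ∀ᶠ t in l, ∀ k, a ≤ k → k ≤ b → f t k = u k := by
  have h1 := (eventually_all_finset (Finset.Icc a b)).mpr
    (fun k (_ : k ∈ Finset.Icc a b) => tendsto_coord h k)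
  filter_upwards [h1] with t ht k hk1 hk2
  exact ht k (Finset.mem_Icc.mpr ⟨hk1, hk2⟩)

lemma tendsto_orbit (hp : p = removeBlock x i n) (hpN : IsPeriodicWith p N) (j : ℤ) :
    Tendsto (fun t : ℕ => shiftZ (j - (t:ℤ) * N) x) atTop (𝓝 (shiftZ j p)) := by
  rw [tendsto_pi_nhds]
  intro k
  have hev : ∀ᶠ t : ℕ in atTop,
      (fun _ : ℕ => shiftZ j p k) t = (fun t : ℕ => shiftZ (j - (t:ℤ) * N) x k) t := by
    rw [eventually_atTop]
    refine ⟨(k + j - i).toNat, fun t ht => ?_⟩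
    have hNpos : 0 < N := hpN.1
    have h1 : k + j - i ≤ (t:ℤ) := by
      have := Int.toNat_le.mp ht
      omega
    have h2 : (t:ℤ) ≤ (t:ℤ) * N := le_mul_of_one_le_right (by positivity) (by exact_mod_cast hNpos)
    have hle : k + (j - (t:ℤ) * N) ≤ i := by linarith
    show p (k + j) = x (k + (j - (t:ℤ) * N))
    rw [x_left x p i n hp _ hle]
    have e1 : k + (j - (t:ℤ)*N) = (k + j) + (-(t:ℤ))*(N:ℤ) := by ring
    rw [e1, per_int p hpN]
  exact Filter.Tendsto.congr' hev tendsto_const_nhds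

lemma orbit_p_mem (hp : p = removeBlock x i n) (hpN : IsPeriodicWith p N) (j : ℤ) :
    shiftZ j p ∈ subshiftGen x :=
  mem_closure_of_tendsto (tendsto_orbit x p i n N hp hpN j)
    (Filter.Eventually.of_forall fun t => ⟨j - (t:ℤ) * N, rfl⟩)

lemma p_not_isolated (hxnp : ¬ IsPeriodicSeq x) (hp : p = removeBlock x i n)
    (hpN : IsPeriodicWith p N) (j : ℤ) (U : Set (ℤ → A)) (hU : IsOpen U)
    (hjU : shiftZ j p ∈ U) :
    ∃ w, w ∈ U ∧ w ∈ subshiftGen x ∧ w ≠ shiftZ j p := by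
  have ht := tendsto_orbit x p i n N hp hpN j
  have hev : ∀ᶠ t : ℕ in atTop, shiftZ (j - (t:ℤ) * N) x ∈ U := ht (hU.mem_nhds hjU)
  obtain ⟨t, ht2⟩ := hev.exists
  exact ⟨_, ht2, subset_closure ⟨_, rfl⟩, x_ne_shift_p x p N hxnp hpN _ j⟩

lemma X_subset (hxnp : ¬ IsPeriodicSeq x) (hp : p = removeBlock x i n)
    (hpN : IsPeriodicWith p N) :
    subshiftGen x ⊆ seqOrbit x ∪ seqOrbit p := by
  intro u hu
  obtain ⟨f, hforb, hft⟩ := mem_closure_iff_seq_limit.mp hu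
  choose mm hmmn using hforb
  by_cases hc : ∃ m0 : ℤ, ∃ᶠ t in atTop, mm t = m0
  · obtain ⟨m0, hm0⟩ := hc
    left
    refine ⟨m0, ?_⟩
    refine (tendsto_nhds_unique_of_frequently_eq hft tendsto_const_nhds ?_)
    exact hm0.mono fun t ht => by rw [hmmn t, ht]
  · push_neg at hc
    have hev : ∀ m0 : ℤ, ∀ᶠ t in atTop, mm t ≠ m0 :=
      fun m0 => hc m0
    have hbig : ∀ R : ℤ, ∀ᶠ t in atTop, R < |mm t| := by
      intro R
      have h1 : ∀ᶠ t in atTop, ∀ m0 ∈ Finset.Icc (-R) R, mm t ≠ m0 :=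
        (eventually_all_finset _).mpr fun m0 _ => hev m0
      filter_upwards [h1] with t ht
      by_contra hcon
      push_neg at hcon
      have h2 := abs_le.mp hcon
      exact ht (mm t) (Finset.mem_Icc.mpr ⟨h2.1, h2.2⟩) rfl
    right
    have hNpos : 0 < N := hpN.1
    have hia := neg_abs_le i
    have hia2 := le_abs_self i
    have huper : IsPeriodicWith u N := by
      refine ⟨hNpos, fun k => ?_⟩
      have hw := tendsto_window hft k (k + N)
      have hb := hbig (|i| + |k| + N + n + 1)
      obtain ⟨t, h1, h2⟩ := (hw.and hb).exists
      have hka := neg_abs_le k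
      have hka2 := le_abs_self k
      have hft1 := h1 k (le_refl k) (by omega)
      have hft2 := h1 (k + N) (by omega) (le_refl _)
      rw [hmmn t] at hft1 hft2
      rw [← hft1, ← hft2]
      show x (k + (N:ℤ) + mm t) = x (k + mm t)
      rcases le_or_gt (mm t) 0 with hs | hs
      · have habs : |mm t| = -mm t := abs_of_nonpos hs
        rw [x_left x p i n hp (k + N + mm t) (by omega),
          x_left x p i n hp (k + mm t) (by omega)]
        have e1 : k + (N:ℤ) + mm t = (k + mm t) + (1:ℤ)*(N:ℤ) := by ring
        rw [e1, per_int p hpN]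
      · have habs : |mm t| = mm t := abs_of_pos hs
        rw [x_right x p i n hp (k + N + mm t) (by omega),
          x_right x p i n hp (k + mm t) (by omega)]
        have e1 : k + (N:ℤ) + mm t - (n:ℤ) = ((k + mm t - (n:ℤ))) + 1*(N:ℤ) := by ring
        rw [e1, per_int p hpN]
    have hw := tendsto_window hft 0 ((N:ℤ) - 1)
    have hb := hbig (|i| + N + n + 1)
    obtain ⟨t, h1, h2⟩ := (hw.and hb).exists
    rcases le_or_gt (mm t) 0 with hs | hs
    · have habs : |mm t| = -mm t := abs_of_nonpos hs
      refine ⟨mm t, agree_window u (shiftZ (mm t) p) huper (shiftZ_per N _ hpN) 0 ?_⟩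
      intro k hk1 hk2
      have h3 := h1 k hk1 (by omega)
      rw [hmmn t] at h3
      rw [← h3]
      show x (k + mm t) = p (k + mm t)
      exact x_left x p i n hp (k + mm t) (by omega)
    · have habs : |mm t| = mm t := abs_of_pos hs
      refine ⟨mm t - n, agree_window u (shiftZ (mm t - n) p) huper (shiftZ_per N _ hpN) 0 ?_⟩
      intro k hk1 hk2
      have h3 := h1 k hk1 (by omega)
      rw [hmmn t] at h3
      rw [← h3]
      show x (k + mm t) = p (k + (mm t - n))
      rw [x_right x p i n hp (k + mm t) (by omega)]
      congr 1; ring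

lemma X_eq (hxnp : ¬ IsPeriodicSeq x) (hp : p = removeBlock x i n)
    (hpN : IsPeriodicWith p N) :
    subshiftGen x = seqOrbit x ∪ seqOrbit p := by
  apply subset_antisymm (X_subset x p i n N hxnp hp hpN)
  rintro u (⟨k, rfl⟩ | ⟨k, rfl⟩)
  · exact subset_closure ⟨k, rfl⟩
  · exact orbit_p_mem x p i n N hp hpN k

end Topo

section BaireSec
open Filter Topology

lemma exists_isolated_of_countable {Z : Type*} [TopologicalSpace Z] [CompactSpace Z]
    [T2Space Z] [Countable Z] [Nonempty Z] : ∃ z : Z, IsOpen ({z} : Set Z) := by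
  by_contra hcon
  push_neg at hcon
  have hd : ∀ z : Z, Dense ({z}ᶜ : Set Z) := fun z =>
    dense_compl_singleton_iff_not_open.mpr (hcon z)
  have ho : ∀ z : Z, IsOpen ({z}ᶜ : Set Z) := fun z => isClosed_singleton.isOpen_compl
  have hdense := dense_iInter_of_isOpen ho hd
  have h2 : (⋂ z : Z, ({z}ᶜ : Set Z)) = ∅ := by ext w; simp
  rw [h2] at hdense
  have := hdense.nonempty
  simp at this

def shiftHomeo {A : Type*} [TopologicalSpace A] (k : ℤ) : (ℤ → A) ≃ₜ (ℤ → A) where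
  toFun := shiftZ k
  invFun := shiftZ (-k)
  left_inv := fun u => by rw [shiftZ_shiftZ]; simp [shiftZ_zero]
  right_inv := fun u => by rw [shiftZ_shiftZ]; simp [shiftZ_zero]
  continuous_toFun := continuous_pi fun i => continuous_apply (i + k)
  continuous_invFun := continuous_pi fun i => continuous_apply (i + (-k))

lemma shiftZ_image_orbit {A : Type*} (e : ℤ) (x : ℤ → A) :
    shiftZ e '' seqOrbit x = seqOrbit x := by
  ext u
  constructor
  · rintro ⟨v, ⟨k, rfl⟩, rfl⟩
    exact ⟨e + k, (shiftZ_shiftZ e k x).symm ▸ rfl⟩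
  · rintro ⟨k, rfl⟩
    exact ⟨shiftZ (k - e) x, ⟨k - e, rfl⟩, by
      rw [shiftZ_shiftZ, show e + (k - e) = k from by ring]⟩

lemma shiftZ_image_X {A : Type*} [TopologicalSpace A] (e : ℤ) (x : ℤ → A) :
    shiftZ e '' subshiftGen x = subshiftGen x := by
  have h1 : shiftZ e '' subshiftGen x = (shiftHomeo (A := A) e) '' closure (seqOrbit x) := rfl
  have h2 : ⇑(shiftHomeo (A := A) e) '' seqOrbit x = seqOrbit x := shiftZ_image_orbit e x
  rw [h1, (shiftHomeo (A := A) e).image_closure, h2]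
  rfl

variable {A : Type*} [Fintype A] [TopologicalSpace A] [DiscreteTopology A]
variable (x p : ℤ → A) (i : ℤ) (n N : ℕ)

lemma isolated_orbit (hxnp : ¬ IsPeriodicSeq x) (hp : p = removeBlock x i n)
    (hpN : IsPeriodicWith p N) :
    ∀ m : ℤ, ∃ U : Set (ℤ → A), IsOpen U ∧ U ∩ subshiftGen x = {shiftZ m x} := by
  have hXc : IsClosed (subshiftGen x) := isClosed_closure
  haveI : CompactSpace (subshiftGen x) :=
    isCompact_iff_compactSpace.mp (hXc.isCompact)
  haveI : Countable (subshiftGen x) := by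
    apply Set.Countable.to_subtype
    rw [X_eq x p i n N hxnp hp hpN]
    have h1 : seqOrbit x = Set.range (fun k : ℤ => shiftZ k x) := by
      ext u; simp [seqOrbit, Set.range, eq_comm]
    have h2 : seqOrbit p = Set.range (fun k : ℤ => shiftZ k p) := by
      ext u; simp [seqOrbit, Set.range, eq_comm]
    rw [h1, h2]
    exact (Set.countable_range _).union (Set.countable_range _)
  haveI : Nonempty (subshiftGen x) := ⟨⟨x, subset_closure ⟨0, (shiftZ_zero x).symm⟩⟩⟩
  obtain ⟨z, hz⟩ := exists_isolated_of_countable (Z := subshiftGen x)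
  obtain ⟨U, hUopen, hpre⟩ := isOpen_induced_iff.mp hz
  have hUX : U ∩ subshiftGen x = {(z : ℤ → A)} := by
    ext w
    constructor
    · rintro ⟨hw1, hw2⟩
      have hmem : (⟨w, hw2⟩ : subshiftGen x) ∈ (Subtype.val ⁻¹' U : Set (subshiftGen x)) := hw1
      rw [hpre] at hmem
      exact congrArg Subtype.val hmem
    · intro hw
      rw [Set.mem_singleton_iff] at hw
      subst hw
      have hmem : z ∈ (Subtype.val ⁻¹' U : Set (subshiftGen x)) := by rw [hpre]; rfl
      exact ⟨hmem, z.2⟩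
  have hzX : (z : ℤ → A) ∈ seqOrbit x ∪ seqOrbit p :=
    X_subset x p i n N hxnp hp hpN z.2
  rcases hzX with ⟨m0, hm0⟩ | ⟨j, hj⟩
  · intro m
    refine ⟨shiftZ (m - m0) '' U, ((shiftHomeo (A := A) (m - m0)).isOpen_image).mpr hUopen, ?_⟩
    have hinj : Function.Injective (shiftZ (m - m0) : (ℤ → A) → (ℤ → A)) :=
      (shiftHomeo (A := A) (m - m0)).injective
    calc shiftZ (m - m0) '' U ∩ subshiftGen x
        = shiftZ (m - m0) '' U ∩ shiftZ (m - m0) '' subshiftGen x := by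
          rw [shiftZ_image_X]
      _ = shiftZ (m - m0) '' (U ∩ subshiftGen x) := (Set.image_inter hinj).symm
      _ = {shiftZ (m - m0) (z : ℤ → A)} := by rw [hUX, Set.image_singleton]
      _ = {shiftZ m x} := by
          rw [hm0, shiftZ_shiftZ]
          congr 2
          ring
  · exfalso
    have hzU : (z : ℤ → A) ∈ U := by
      have : (z : ℤ → A) ∈ U ∩ subshiftGen x := by rw [hUX]; rfl
      exact this.1
    rw [hj] at hzU
    obtain ⟨w, hw1, hw2, hw3⟩ := p_not_isolated x p i n N hxnp hp hpN j U hUopen hzU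
    have : w ∈ U ∩ subshiftGen x := ⟨hw1, hw2⟩
    rw [hUX, hj] at this
    exact hw3 this

end BaireSec

section ConjMapSec
open Filter Topology

noncomputable def conjMap {A B : Type*} (x p : ℤ → A) (y q : ℤ → B) :
    (ℤ → A) → (ℤ → B) :=
  fun u =>
    if h : ∃ m : ℤ, u = shiftZ m x then shiftZ h.choose y
    else if h2 : ∃ j : ℤ, u = shiftZ j p then shiftZ h2.choose q
    else q

variable {A B : Type*}

lemma conjMap_x (x p : ℤ → A) (y q : ℤ → B) (hxnp : ¬IsPeriodicSeq x) (m : ℤ) :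
    conjMap x p y q (shiftZ m x) = shiftZ m y := by
  rw [conjMap]
  have h : ∃ m' : ℤ, shiftZ m x = shiftZ m' x := ⟨m, rfl⟩
  rw [dif_pos h]
  exact congrArg (fun t : ℤ => shiftZ t y) (shift_inj x hxnp h.choose_spec).symm

lemma conjMap_p (x p : ℤ → A) (y q : ℤ → B) (N : ℕ) (hxnp : ¬IsPeriodicSeq x)
    (hpN : IsPeriodicWith p N) (hminp : ∀ M, IsPeriodicWith p M → N ≤ M)
    (hqN : IsPeriodicWith q N) (j : ℤ) :
    conjMap x p y q (shiftZ j p) = shiftZ j q := by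
  rw [conjMap]
  have h1 : ¬ ∃ m : ℤ, shiftZ j p = shiftZ m x := by
    rintro ⟨m, hm⟩
    exact x_ne_shift_p x p N hxnp hpN m j hm.symm
  rw [dif_neg h1]
  have h2 : ∃ j' : ℤ, shiftZ j p = shiftZ j' p := ⟨j, rfl⟩
  rw [dif_pos h2]
  apply shift_p_eq_of_dvd q N hqN
  have hdvd := dvd_of_shift_p_eq p N hpN hminp h2.choose_spec
  have e1 : h2.choose - j = -(j - h2.choose) := by ring
  rw [e1]
  exact dvd_neg.mpr hdvd

lemma per_mul {u : ℤ → A} {M₁ : ℕ} (h : IsPeriodicWith u M₁) (M₂ : ℕ) (hM₂ : 0 < M₂) :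
    IsPeriodicWith u (M₁ * M₂) := by
  refine ⟨Nat.mul_pos h.1 hM₂, fun k => ?_⟩
  have e : (((M₁ * M₂ : ℕ)) : ℤ) = (M₂ : ℤ) * (M₁ : ℤ) := by push_cast; ring
  rw [e]
  exact per_int u h (M₂ : ℤ) k

lemma invar_of_eventual (u : ℤ → A) (N : ℕ) (hu : IsPeriodicWith u N) (d K : ℤ)
    (h : ∀ k, K ≤ k → u (k + d) = u k) : ∀ k, u (k + d) = u k := by
  intro k
  set s : ℤ := max (K - k) 0 with hs
  have hs0 : 0 ≤ s := le_max_right _ _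
  have hsK : K ≤ k + s * N := by
    have h1 : K - k ≤ s := le_max_left _ _
    have h2 : s ≤ s * N := le_mul_of_one_le_right hs0 (by exact_mod_cast hu.1)
    linarith
  have h3 := h (k + s * N) hsK
  calc u (k + d) = u ((k + d) + s * N) := (per_int u hu s (k + d)).symm
    _ = u (k + s * N) := by
        rw [show (k + d) + s * (N:ℤ) = (k + s * N) + d from by ring]
        exact h3
    _ = u k := per_int u hu s k

lemma p_unique (x : ℤ → A) (i₁ i₂ : ℤ) (n₁ n₂ : ℕ) {M₁ M₂ : ℕ}
    (h₁ : IsPeriodicWith (removeBlock x i₁ n₁) M₁)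
    (h₂ : IsPeriodicWith (removeBlock x i₂ n₂) M₂) :
    removeBlock x i₁ n₁ = removeBlock x i₂ n₂ := by
  have hM₁ := h₁.1
  have hM₂ := h₂.1
  have hq₂ : IsPeriodicWith (removeBlock x i₂ n₂) (M₁ * M₂) := by
    rw [Nat.mul_comm]
    exact per_mul h₂ M₁ hM₁
  apply agree_window _ _ (per_mul h₁ M₂ hM₂) hq₂ (min i₁ i₂ - (M₁ * M₂ : ℕ))
  intro k hk1 hk2
  have hk : k ≤ min i₁ i₂ := by omega
  have e₁ : removeBlock x i₁ n₁ k = x k := by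
    simp [removeBlock, show k ≤ i₁ from le_trans hk (min_le_left _ _)]
  have e₂ : removeBlock x i₂ n₂ k = x k := by
    simp [removeBlock, show k ≤ i₂ from le_trans hk (min_le_right _ _)]
  rw [e₁, e₂]

lemma occ_cong (x p : ℤ → A) (i : ℤ) (n N : ℕ) (i₂ : ℤ) (n₂ : ℕ)
    (hp : p = removeBlock x i n) (hpN : IsPeriodicWith p N)
    (hminp : ∀ M, IsPeriodicWith p M → N ≤ M)
    (hocc₂ : IsAnomalyOcc x i₂ n₂) : (N:ℤ) ∣ (n:ℤ) - (n₂:ℤ) := by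
  obtain ⟨M₂, hM₂⟩ := hocc₂.2
  have hpp : p = removeBlock x i₂ n₂ := by
    rw [hp]
    exact p_unique x i i₂ n n₂ (hp ▸ hpN) hM₂
  have hA : ∀ k : ℤ, i < k → p k = x (k + n) := by
    intro k hk
    rw [hp]
    simp [removeBlock, show ¬ (k ≤ i) from by omega]
  have hB : ∀ k : ℤ, i₂ < k → p k = x (k + n₂) := by
    intro k hk
    rw [hpp]
    simp [removeBlock, show ¬ (k ≤ i₂) from by omega]
  have hev : ∀ k : ℤ, (max i i₂ + n₂ + 1) ≤ k → p (k + ((n:ℤ) - n₂)) = p k := by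
    intro k hk
    have hmax1 : i ≤ max i i₂ := le_max_left _ _
    have hmax2 : i₂ ≤ max i i₂ := le_max_right _ _
    have h1 : i₂ < k + ((n:ℤ) - n₂) := by omega
    rw [hB _ h1, hA _ (by omega)]
    congr 1
    ring
  have hinv := invar_of_eventual p N hpN ((n:ℤ) - n₂) (max i i₂ + n₂ + 1) hev
  exact dvd_of_invar p hpN hminp hinv

end ConjMapSec

section MainSec
open Filter Topology

theorem main_conj {A B : Type*} [Fintype A] [Fintype B]
    [TopologicalSpace A] [DiscreteTopology A] [TopologicalSpace B] [DiscreteTopology B]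
    (x p : ℤ → A) (y q : ℤ → B) (i i' : ℤ) (n n' N : ℕ)
    (hxnp : ¬IsPeriodicSeq x) (hynp : ¬IsPeriodicSeq y)
    (hp : p = removeBlock x i n) (hq : q = removeBlock y i' n')
    (hpN : IsPeriodicWith p N) (hqN : IsPeriodicWith q N)
    (hminp : ∀ M, IsPeriodicWith p M → N ≤ M) (hminq : ∀ M, IsPeriodicWith q M → N ≤ M)
    (hnn' : (N:ℤ) ∣ (n:ℤ) - (n':ℤ)) :
    Conjugate (subshiftGen x) (subshiftGen y) := by
  have hNpos : 0 < N := hpN.1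
  have hFmem : ∀ u ∈ subshiftGen x, conjMap x p y q u ∈ subshiftGen y := by
    intro u hu
    rcases X_subset x p i n N hxnp hp hpN hu with ⟨m, rfl⟩ | ⟨j, rfl⟩
    · rw [conjMap_x x p y q hxnp m]; exact subset_closure ⟨m, rfl⟩
    · rw [conjMap_p x p y q N hxnp hpN hminp hqN j]
      exact orbit_p_mem y q i' n' N hq hqN j
  set e : subshiftGen x → subshiftGen y :=
    fun u => ⟨conjMap x p y q u.1, hFmem u.1 u.2⟩ with he
  have hinj : Function.Injective e := by
    intro u v huv
    have hval : conjMap x p y q u.1 = conjMap x p y q v.1 := congrArg Subtype.val huv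
    apply Subtype.ext
    rcases X_subset x p i n N hxnp hp hpN u.2 with ⟨m1, hm1⟩ | ⟨j1, hj1⟩ <;>
      rcases X_subset x p i n N hxnp hp hpN v.2 with ⟨m2, hm2⟩ | ⟨j2, hj2⟩
    · rw [hm1, hm2] at hval ⊢
      rw [conjMap_x x p y q hxnp, conjMap_x x p y q hxnp] at hval
      rw [shift_inj y hynp hval]
    · rw [hm1, hj2] at hval
      rw [conjMap_x x p y q hxnp, conjMap_p x p y q N hxnp hpN hminp hqN] at hval
      exact absurd hval (x_ne_shift_p y q N hynp hqN m1 j2)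
    · rw [hj1, hm2] at hval
      rw [conjMap_p x p y q N hxnp hpN hminp hqN, conjMap_x x p y q hxnp] at hval
      exact absurd hval.symm (x_ne_shift_p y q N hynp hqN m2 j1)
    · rw [hj1, hj2] at hval ⊢
      rw [conjMap_p x p y q N hxnp hpN hminp hqN,
        conjMap_p x p y q N hxnp hpN hminp hqN] at hval
      exact shift_p_eq_of_dvd p N hpN (dvd_of_shift_p_eq q N hqN hminq hval)
  have hsurj : Function.Surjective e := by
    intro v
    rcases X_subset y q i' n' N hynp hq hqN v.2 with ⟨m, hm⟩ | ⟨j, hj⟩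
    · refine ⟨⟨shiftZ m x, subset_closure ⟨m, rfl⟩⟩, ?_⟩
      apply Subtype.ext
      show conjMap x p y q (shiftZ m x) = v.1
      rw [conjMap_x x p y q hxnp m, hm]
    · refine ⟨⟨shiftZ j p, orbit_p_mem x p i n N hp hpN j⟩, ?_⟩
      apply Subtype.ext
      show conjMap x p y q (shiftZ j p) = v.1
      rw [conjMap_p x p y q N hxnp hpN hminp hqN j, hj]
  have hcont : ContinuousOn (conjMap x p y q) (subshiftGen x) := by
    intro u0 hu0
    rcases X_subset x p i n N hxnp hp hpN hu0 with ⟨m, rfl⟩ | ⟨j, rfl⟩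
    · obtain ⟨U, hUo, hUX⟩ := isolated_orbit x p i n N hxnp hp hpN m
      have hmemU : shiftZ m x ∈ U := by
        have h0 : shiftZ m x ∈ U ∩ subshiftGen x := by rw [hUX]; rfl
        exact h0.1
      have h1 : 𝓝[subshiftGen x] (shiftZ m x) = pure (shiftZ m x) := by
        rw [nhdsWithin_restrict _ hmemU hUo, Set.inter_comm, hUX, nhdsWithin_singleton]
      show Tendsto (conjMap x p y q) (𝓝[subshiftGen x] (shiftZ m x))
        (𝓝 (conjMap x p y q (shiftZ m x)))
      rw [h1]
      exact tendsto_pure_nhds _ _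
    · have hval : conjMap x p y q (shiftZ j p) = shiftZ j q :=
        conjMap_p x p y q N hxnp hpN hminp hqN j
      show Tendsto (conjMap x p y q) (𝓝[subshiftGen x] (shiftZ j p))
        (𝓝 (conjMap x p y q (shiftZ j p)))
      rw [hval, tendsto_pi_nhds]
      intro k
      have hi'a := le_abs_self i'
      have hi'b := neg_abs_le i'
      have hia := le_abs_self i
      have hib := neg_abs_le i
      have hka := le_abs_self k
      have hkb := neg_abs_le k
      have habsi := abs_nonneg i
      have habsi' := abs_nonneg i'
      have habsk := abs_nonneg k
      have hn0 : (0:ℤ) ≤ (n:ℤ) := Int.natCast_nonneg n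
      have hn'0 : (0:ℤ) ≤ (n':ℤ) := Int.natCast_nonneg n'
      have hN1 : (1:ℤ) ≤ (N:ℤ) := by exact_mod_cast hNpos
      set T : ℤ := |i| + |i'| + |k| + (N:ℤ) + (n:ℤ) + (n':ℤ) + 1 with hT
      set S : ℤ := (N:ℤ) + (n:ℤ) + T with hS
      have hWo : IsOpen {u : ℤ → A | ∀ l ∈ Finset.Icc (-S) S, u l = shiftZ j p l} := by
        rw [show {u : ℤ → A | ∀ l ∈ Finset.Icc (-S) S, u l = shiftZ j p l}
            = ⋂ l ∈ Finset.Icc (-S) S, {u : ℤ → A | u l = shiftZ j p l} from by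
          ext u; simp]
        refine isOpen_biInter_finset fun l _ => ?_
        have hpre : {u : ℤ → A | u l = shiftZ j p l}
            = (fun u : ℤ → A => u l) ⁻¹' {shiftZ j p l} := rfl
        rw [hpre]
        exact (isOpen_discrete _).preimage (continuous_apply l)
      have hWmem : {u : ℤ → A | ∀ l ∈ Finset.Icc (-S) S, u l = shiftZ j p l}
          ∈ 𝓝[subshiftGen x] (shiftZ j p) :=
        nhdsWithin_le_nhds (hWo.mem_nhds (fun l _ => rfl))
      refine Filter.Tendsto.congr' ?_ tendsto_const_nhds
      filter_upwards [hWmem, self_mem_nhdsWithin] with u huW huX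
      rcases X_subset x p i n N hxnp hp hpN huX with ⟨m, rfl⟩ | ⟨j2, rfl⟩
      · show shiftZ j q k = conjMap x p y q (shiftZ m x) k
        rw [conjMap_x x p y q hxnp m]
        show q (k + j) = y (k + m)
        have hag : ∀ l : ℤ, -S ≤ l → l ≤ S → x (l + m) = p (l + j) := fun l h1 h2 =>
          huW l (Finset.mem_Icc.mpr ⟨h1, h2⟩)
        have h13 := lemma13 x p i n N hxnp hp hpN hminp T S m j
          (by linarith) (by linarith) hag
        rcases h13 with ⟨hm1, hm2⟩ | ⟨hm1, hm2⟩
        · rw [x_left y q i' n' hq (k + m) (by linarith)]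
          rw [show k + m = (k + j) + (m - j) from by ring, period_of_dvd q hqN hm2]
        · rw [x_right y q i' n' hq (k + m) (by linarith)]
          have hdvd : (N:ℤ) ∣ (k + m - (n':ℤ)) - (k + j) := by
            rw [show (k + m - (n':ℤ)) - (k + j) = (m - n - j) + ((n:ℤ) - n') from by ring]
            exact dvd_add hm2 hnn'
          rw [show k + m - (n':ℤ) = (k + j) + ((k + m - (n':ℤ)) - (k + j)) from by ring,
            period_of_dvd q hqN hdvd]
      · show shiftZ j q k = conjMap x p y q (shiftZ j2 p) k
        rw [conjMap_p x p y q N hxnp hpN hminp hqN j2]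
        have hagp : (fun l => p (l + j2)) = (fun l => p (l + j)) := by
          apply agree_window _ _ (per_offset N j2 hpN) (per_offset N j hpN) 0
          intro l h1 h2
          exact huW l (Finset.mem_Icc.mpr ⟨by linarith, by linarith⟩)
        have hdvd : (N:ℤ) ∣ j - j2 := by
          have h0 : shiftZ j2 p = shiftZ j p := hagp
          have h1 := dvd_of_shift_p_eq p N hpN hminp h0
          rw [show j - j2 = -(j2 - j) from by ring]
          exact dvd_neg.mpr h1
        exact congrFun (shift_p_eq_of_dvd q N hqN hdvd) k
  haveI : CompactSpace (subshiftGen x) :=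
    isCompact_iff_compactSpace.mp isClosed_closure.isCompact
  have hecont : Continuous e :=
    (continuousOn_iff_continuous_restrict.mp hcont).subtype_mk _
  have heq : Continuous ⇑(Equiv.ofBijective e ⟨hinj, hsurj⟩) := hecont
  refine ⟨Continuous.homeoOfEquivCompactToT2 heq, ?_⟩
  intro u hu hu'
  show conjMap x p y q (shiftMap u) = shiftMap (conjMap x p y q u)
  have hsmA : ∀ w : ℤ → A, shiftMap w = shiftZ 1 w := fun _ => rfl
  have hsmB : ∀ w : ℤ → B, shiftMap w = shiftZ 1 w := fun _ => rfl
  rcases X_subset x p i n N hxnp hp hpN hu with ⟨m, rfl⟩ | ⟨j, rfl⟩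
  · rw [hsmA (shiftZ m x), shiftZ_shiftZ, conjMap_x x p y q hxnp (1 + m),
      conjMap_x x p y q hxnp m, hsmB (shiftZ m y), shiftZ_shiftZ]
  · rw [hsmA (shiftZ j p), shiftZ_shiftZ, conjMap_p x p y q N hxnp hpN hminp hqN (1 + j),
      conjMap_p x p y q N hxnp hpN hminp hqN j, hsmB (shiftZ j q), shiftZ_shiftZ]

end MainSec


/-- If `x` and `y` are eventually periodic sequences with the same least
period `N` and `a(x) ≡ a(y) (mod N)`, then the subshifts they generate are conjugate. -/
theorem stmt_3 {A B : Type*} [Fintype A] [Fintype B]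
    [TopologicalSpace A] [DiscreteTopology A] [TopologicalSpace B] [DiscreteTopology B]
    (x : ℤ → A) (y : ℤ → B) (hx : EventuallyPeriodic x) (hy : EventuallyPeriodic y)
    (N : ℕ) (hN : evLeastPeriod x = N) (hM : evLeastPeriod y = N)
    (h : anomalySize x ≡ anomalySize y [MOD N]) :
    Conjugate (subshiftGen x) (subshiftGen y) := by
  obtain ⟨hxnp, i0, n0, hocc0⟩ := hx
  obtain ⟨hynp, i0', n0', hocc0'⟩ := hy
  have hne : {M : ℕ | ∃ (i : ℤ) (n : ℕ), IsAnomalyOcc x i n ∧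
      IsPeriodicWith (removeBlock x i n) M}.Nonempty := by
    obtain ⟨M, hMper⟩ := hocc0.2
    exact ⟨M, i0, n0, hocc0, hMper⟩
  have hNmem : N ∈ {M : ℕ | ∃ (i : ℤ) (n : ℕ), IsAnomalyOcc x i n ∧
      IsPeriodicWith (removeBlock x i n) M} := by
    rw [← hN]
    exact Nat.sInf_mem hne
  obtain ⟨i, n, hocc, hpN⟩ := hNmem
  have hminp : ∀ M, IsPeriodicWith (removeBlock x i n) M → N ≤ M := by
    intro M hMper
    have hmem : M ∈ {M : ℕ | ∃ (i : ℤ) (n : ℕ), IsAnomalyOcc x i n ∧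
        IsPeriodicWith (removeBlock x i n) M} := ⟨i, n, hocc, hMper⟩
    have h2 : evLeastPeriod x ≤ M := Nat.sInf_le hmem
    rw [hN] at h2
    exact h2
  have hne' : {M : ℕ | ∃ (i : ℤ) (n : ℕ), IsAnomalyOcc y i n ∧
      IsPeriodicWith (removeBlock y i n) M}.Nonempty := by
    obtain ⟨M, hMper⟩ := hocc0'.2
    exact ⟨M, i0', n0', hocc0', hMper⟩
  have hNmem' : N ∈ {M : ℕ | ∃ (i : ℤ) (n : ℕ), IsAnomalyOcc y i n ∧
      IsPeriodicWith (removeBlock y i n) M} := by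
    rw [← hM]
    exact Nat.sInf_mem hne'
  obtain ⟨i', n', hocc', hqN⟩ := hNmem'
  have hminq : ∀ M, IsPeriodicWith (removeBlock y i' n') M → N ≤ M := by
    intro M hMper
    have hmem : M ∈ {M : ℕ | ∃ (i : ℤ) (n : ℕ), IsAnomalyOcc y i n ∧
        IsPeriodicWith (removeBlock y i n) M} := ⟨i', n', hocc', hMper⟩
    have h2 : evLeastPeriod y ≤ M := Nat.sInf_le hmem
    rw [hM] at h2
    exact h2
  obtain ⟨ia, hia⟩ : ∃ i : ℤ, IsAnomalyOcc x i (anomalySize x) :=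
    Nat.sInf_mem (⟨n0, i0, hocc0⟩ : {n : ℕ | ∃ i : ℤ, IsAnomalyOcc x i n}.Nonempty)
  obtain ⟨ia', hia'⟩ : ∃ i : ℤ, IsAnomalyOcc y i (anomalySize y) :=
    Nat.sInf_mem (⟨n0', i0', hocc0'⟩ : {n : ℕ | ∃ i : ℤ, IsAnomalyOcc y i n}.Nonempty)
  have h1 : (N:ℤ) ∣ (n:ℤ) - (anomalySize x : ℤ) :=
    occ_cong x (removeBlock x i n) i n N ia (anomalySize x) rfl hpN hminp hia
  have h2 : (N:ℤ) ∣ (n':ℤ) - (anomalySize y : ℤ) :=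
    occ_cong y (removeBlock y i' n') i' n' N ia' (anomalySize y) rfl hqN hminq hia'
  have h3 : (N:ℤ) ∣ (anomalySize x : ℤ) - (anomalySize y : ℤ) := by
    have hd := h.dvd
    rw [show (anomalySize x : ℤ) - (anomalySize y : ℤ)
        = -(((anomalySize y : ℤ)) - (anomalySize x : ℤ)) from by ring]
    exact dvd_neg.mpr hd
  have hnn' : (N:ℤ) ∣ (n:ℤ) - (n':ℤ) := by
    have hsum := dvd_add (dvd_add h1 h3) (dvd_neg.mpr h2)
    rw [show ((n:ℤ) - anomalySize x) + ((anomalySize x : ℤ) - anomalySize y)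
        + -((n':ℤ) - anomalySize y) = (n:ℤ) - (n':ℤ) from by ring] at hsum
    exact hsum
  exact main_conj x (removeBlock x i n) y (removeBlock y i' n') i i' n n' N
    hxnp hynp rfl rfl hpN hqN hminp hminq hnn'
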